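/- Let μ be a cardinal of cofinality ω and let γ(·,·), (α_η : η < μ) be as in the construction above, and define c : μ⁺ × μ⁺ → 2 by c(α,β) = 1 iff β = γ(α,ε) for some ε < μ. Suppose S = {γ_n : n ∈ ω} ⊆ μ⁺ is infinite with γ_0 < γ_1 < ⋯ and sup{η < μ : ∃ i ∈ ω, γ_i = (γ_{i+1})_η} < μ. Then the set T(S) = {β < μ⁺ : ∀ α ∈ S, c(α,β) = 1} has cardinality less than μ. -/

import Mathlib

open Cardinal

/-- Let `μ` be a singular cardinal of countable cofinality, `e` the family of
enumerations of smaller ordinals, `γ` the recursively chosen ordinals satisfying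
the key injectivity property `(∗)`, and define `c : μ⁺ × μ⁺ → 2` by `c α β = 1`
iff `β = γ α ε` for some `ε < μ`.  If `S = {g n : n ∈ ω}` is an increasing
`ω`-sequence below `μ⁺` with `sup {η : ∃ i, g i = e (g (i+1)) η} < μ`, then
`T(S) = {β < μ⁺ : ∀ α ∈ S, c α β = 1}` has cardinality less than `μ`. -/
theorem TS_small (μ : Cardinal) (hμ : Cardinal.aleph0 < μ)
    (hcf : μ.ord.cof = Cardinal.aleph0)
    (γ e : Ordinal → Ordinal → Ordinal)
    (hesurj : ∀ α : Ordinal, 0 < α → α < (Order.succ μ).ord →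
      ∀ x < α, ∃ η < μ.ord, e α η = x)
    (hstar : ∀ α ε η ζ : Ordinal, η < ε → γ (e α η) ζ = γ α ε → ε < ζ)
    (c : Ordinal → Ordinal → Fin 2)
    (hc : ∀ α β : Ordinal, c α β = 1 ↔ ∃ ε < μ.ord, β = γ α ε)
    (g : ℕ → Ordinal) (hg : StrictMono g)
    (hgb : ∀ n, g n < (Order.succ μ).ord)
    (hsup : ∃ ρ < μ.ord, ∀ η : Ordinal, (∃ i : ℕ, g i = e (g (i + 1)) η) → η < ρ) :
    Cardinal.mk {β : Ordinal | β < (Order.succ μ).ord ∧ ∀ i : ℕ, c (g i) β = 1} <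
      Cardinal.lift.{1,0} μ := by
  obtain ⟨ρ, hρ, hρb⟩ := hsup
  set T := {β : Ordinal | β < (Order.succ μ).ord ∧ ∀ i : ℕ, c (g i) β = 1}
  -- every β in T is γ (g i) ζ for some i and ζ < ρ
  have key : ∀ β : T, ∃ p : ℕ × Ordinal, p.2 < ρ ∧ (β : Ordinal) = γ (g p.1) p.2 := by
    rintro ⟨β, hβ, hβc⟩
    have hε : ∀ i : ℕ, ∃ ε < μ.ord, β = γ (g i) ε := fun i => (hc (g i) β).1 (hβc i)
    choose ε hεlt hεeq using hε
    by_contra hcon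
    push_neg at hcon
    have hge : ∀ i, ρ ≤ ε i := by
      intro i
      by_contra h
      exact (hcon (i, ε i) (lt_of_not_ge h)) (hεeq i)
    have hdec : ∀ i : ℕ, ε (i + 1) < ε i := by
      intro i
      have hpos : 0 < g (i + 1) :=
        lt_of_le_of_lt (zero_le (a := g 0)) (hg (Nat.succ_pos i))
      obtain ⟨η, hη, hηe⟩ := hesurj (g (i + 1)) hpos (hgb (i + 1)) (g i) (hg (Nat.lt_succ_self i))
      have hηρ : η < ρ := hρb η ⟨i, hηe.symm⟩
      have hηε : η < ε (i + 1) := lt_of_lt_of_le hηρ (hge (i + 1))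
      refine hstar (g (i + 1)) (ε (i + 1)) η (ε i) hηε ?_
      rw [hηe, ← hεeq i, hεeq (i + 1)]
    exact (RelEmbedding.natGT ε hdec).not_wellFounded Ordinal.lt_wf
  choose f hf1 hf2 using key
  have hinj : Function.Injective (fun β : T => ((f β).1, (⟨(f β).2, hf1 β⟩ : Set.Iio ρ))) := by
    intro β1 β2 h
    simp only [Prod.mk.injEq, Subtype.mk.injEq] at h
    apply Subtype.ext
    rw [hf2 β1, hf2 β2, h.1, Subtype.mk.inj h.2]
  have h1 : Cardinal.mk T ≤ Cardinal.mk (ℕ × Set.Iio ρ) := Cardinal.mk_le_of_injective hinj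
  have h2 : Cardinal.mk (ℕ × Set.Iio ρ) = Cardinal.lift.{1,0} Cardinal.aleph0 * Cardinal.mk (Set.Iio ρ) := by
    rw [Cardinal.mk_prod, Cardinal.mk_nat, Cardinal.lift_id']
  have h3 : Cardinal.mk (Set.Iio ρ) = Cardinal.lift.{1,0} ρ.card := Ordinal.mk_Iio_ordinal ρ
  have hρμ : ρ.card < μ := Cardinal.lt_ord.1 hρ
  refine lt_of_le_of_lt h1 ?_
  rw [h2, h3]
  refine Cardinal.mul_lt_of_lt ?_ ?_ ?_
  · exact Cardinal.aleph0_le_lift.2 hμ.le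
  · exact Cardinal.lift_lt.2 hμ
  · exact Cardinal.lift_lt.2 hρμ
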